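/- arXiv:1705.05427 — 7 statements merged into one kernel-verified Lean document; each statement's English description precedes it below -/
import Mathlib

section
/- Let θ, θ' ∈ ℝ^S with |S| ≥ 2 and suppose θ - θ' is not a scalar multiple of the all-ones vector. Then there exists a controlled Markov process E (with at least two actions) and a task reward R ∈ ℝ^S such that the set of optimal policies for reward R + θ differs from the set of optimal policies for reward R + θ'. In particular, taking R = -θ', all policies are optimal under R + θ' but not all are optimal under R + θ. -/
/-- A controlled Markov process: finite state space `S`, action space `A`,
initial distribution `μ`, transition function `P`, discount factor `γ ∈ [0,1)`. -/
structure CMP (S A : Type) [Fintype S] where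
  μ : S → ℝ
  μ_nonneg : ∀ s, 0 ≤ μ s
  μ_sum : ∑ s, μ s = 1
  P : S → A → S → ℝ
  P_nonneg : ∀ s a s', 0 ≤ P s a s'
  P_sum : ∀ s a, ∑ s', P s a s' = 1
  γ : ℝ
  γ_nonneg : 0 ≤ γ
  γ_lt_one : γ < 1

variable {S A : Type} [Fintype S] [DecidableEq S]

/-- Transition matrix of the Markov chain induced by policy `π`. -/
def CMP.polMatrix (E : CMP S A) (π : S → A) : Matrix S S ℝ :=
  Matrix.of fun s s' => E.P s (π s) s'

/-- Normalized discounted state occupancy: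
`η(s) = (1-γ) · Σ_{t ≥ 1} γ^(t-1) · P(s_t = s | s_0 ∼ μ; π)`. -/
noncomputable def CMP.occupancy (E : CMP S A) (π : S → A) (s : S) : ℝ :=
  (1 - E.γ) * ∑' t : ℕ, E.γ ^ t * Matrix.vecMul E.μ (E.polMatrix π ^ (t + 1)) s

/-- Value of policy `π` under reward `Y`: `Y^⊤ η^π`. -/
noncomputable def CMP.value (E : CMP S A) (Y : S → ℝ) (π : S → A) : ℝ :=
  ∑ s, Y s * E.occupancy π s

/-- A policy is optimal for reward `Y` if it maximizes the value. -/
def CMP.IsOptimal (E : CMP S A) (Y : S → ℝ) (π : S → A) : Prop :=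
  ∀ π', E.value Y π' ≤ E.value Y π

/-- if θ - θ' is not constant (and |S| ≥ 2), there is an
environment with two actions and a task reward (namely R = -θ') for which the
optimal-policy sets under R+θ and R+θ' differ; indeed all policies are optimal
under R+θ' but not all under R+θ. -/
theorem stmt2 (θ θ' : S → ℝ) (hcard : 2 ≤ Fintype.card S)
    (h : ¬ ∃ c : ℝ, ∀ s, θ s - θ' s = c) :
    ∃ E : CMP S (Fin 2),
      {π | E.IsOptimal (fun s => -θ' s + θ s) π} ≠
        {π | E.IsOptimal (fun s => -θ' s + θ' s) π} ∧
      (∀ π, E.IsOptimal (fun s => -θ' s + θ' s) π) ∧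
      ¬ (∀ π, E.IsOptimal (fun s => -θ' s + θ s) π) := by
  classical
  have hne : Nonempty S := Fintype.card_pos_iff.mp (by omega)
  obtain ⟨i, j, hij⟩ : ∃ i j : S, θ i - θ' i ≠ θ j - θ' j := by
    by_contra hc
    push_neg at hc
    exact h ⟨θ (Classical.arbitrary S) - θ' (Classical.arbitrary S),
      fun s => hc s (Classical.arbitrary S)⟩
  set E : CMP S (Fin 2) :=
    { μ := fun s => if s = i then 1 else 0
      μ_nonneg := fun s => by split <;> norm_num
      μ_sum := by simp
      P := fun s a s' => if s = i ∧ a = 1 then (if s' = j then (1:ℝ) else 0)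
        else (if s' = s then 1 else 0)
      P_nonneg := fun s a s' => by split <;> split <;> norm_num
      P_sum := fun s a => by split <;> simp
      γ := 0
      γ_nonneg := le_refl 0
      γ_lt_one := by norm_num } with hE
  have hocc : ∀ (π : S → Fin 2) (s : S), E.occupancy π s = E.P i (π i) s := by
    intro π s
    have ht : ∑' t : ℕ, (E.γ : ℝ) ^ t * Matrix.vecMul E.μ (E.polMatrix π ^ (t + 1)) s
        = Matrix.vecMul E.μ (E.polMatrix π ^ 1) s := by
      rw [tsum_eq_single 0]
      · simp [hE]
      · intro t ht
        have hγ : (E.γ : ℝ) = 0 := rfl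
        rw [hγ, zero_pow ht, zero_mul]
    rw [CMP.occupancy, ht, pow_one]
    have hv : Matrix.vecMul E.μ (E.polMatrix π) s = E.polMatrix π i s := by
      simp only [Matrix.vecMul, dotProduct]
      simp [hE, ite_mul]
    rw [hv]
    simp [hE, CMP.polMatrix]
  have hval : ∀ (Y : S → ℝ) (π : S → Fin 2),
      E.value Y π = if π i = 1 then Y j else Y i := by
    intro Y π
    rw [CMP.value]
    simp only [hocc]
    by_cases hp : π i = 1
    · simp [hE, hp, mul_ite, Finset.sum_ite_eq']
    · simp [hE, hp, mul_ite, Finset.sum_ite_eq']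
  have h2 : ∀ π, E.IsOptimal (fun s => -θ' s + θ' s) π := by
    intro π π'
    rw [hval, hval]
    split <;> split <;> simp
  have h3 : ¬ (∀ π, E.IsOptimal (fun s => -θ' s + θ s) π) := by
    intro hall
    have ha := hall (fun _ => 0) (fun _ => 1)
    have hb := hall (fun _ => 1) (fun _ => 0)
    rw [hval, hval] at ha hb
    simp only [if_pos rfl, if_neg (by decide : ¬ ((0 : Fin 2) = 1))] at ha hb
    have : -θ' j + θ j = -θ' i + θ i := le_antisymm ha hb
    apply hij
    linarith
  refine ⟨E, ?_, h2, h3⟩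
  intro heq
  apply h3
  intro π
  have : π ∈ {π | E.IsOptimal (fun s => -θ' s + θ' s) π} := h2 π
  rw [← heq] at this
  exact this
end

section
/- Two reward functions θ, θ' ∈ ℝ^S are behaviorally equivalent in all MDP tasks (i.e., for every environment E and task reward R, the sets of optimal policies under R+θ and under R+θ' coincide) if and only if θ - θ' = c·1 for some c ∈ ℝ. -/
variable {S A : Type} [Fintype S] [DecidableEq S]

section aux
variable {S A : Type} [Fintype S] [DecidableEq S]

lemma vecMul_apply' (v : S → ℝ) (M : Matrix S S ℝ) (j : S) :
    Matrix.vecMul v M j = ∑ i, v i * M i j := by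
  simp [Matrix.vecMul, dotProduct]

lemma prob_vecMul (ν : S → ℝ) (hν0 : ∀ s, 0 ≤ ν s) (hν1 : ∑ s, ν s = 1)
    (M : Matrix S S ℝ) (hM0 : ∀ i j, 0 ≤ M i j) (hM1 : ∀ i, ∑ j, M i j = 1) :
    (∀ s, 0 ≤ Matrix.vecMul ν M s) ∧ ∑ s, Matrix.vecMul ν M s = 1 := by
  constructor
  · intro s
    rw [vecMul_apply']
    exact Finset.sum_nonneg fun i _ => mul_nonneg (hν0 i) (hM0 i s)
  · simp only [vecMul_apply']
    rw [Finset.sum_comm]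
    calc ∑ i, ∑ j, ν i * M i j = ∑ i, ν i * ∑ j, M i j := by
          simp [Finset.mul_sum]
      _ = 1 := by simp only [hM1, mul_one, hν1]

lemma prob_iter (E : CMP S A) (π : S → A) (t : ℕ) :
    (∀ s, 0 ≤ Matrix.vecMul E.μ (E.polMatrix π ^ (t + 1)) s) ∧
      ∑ s, Matrix.vecMul E.μ (E.polMatrix π ^ (t + 1)) s = 1 := by
  induction t with
  | zero =>
      rw [pow_one]
      exact prob_vecMul E.μ E.μ_nonneg E.μ_sum _ (fun i j => E.P_nonneg i (π i) j)
        (fun i => E.P_sum i (π i))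
  | succ n ih =>
      have : E.polMatrix π ^ (n + 1 + 1) = E.polMatrix π ^ (n + 1) * E.polMatrix π :=
        pow_succ _ _
      rw [this]
      simp only [← Matrix.vecMul_vecMul]
      exact prob_vecMul _ ih.1 ih.2 _ (fun i j => E.P_nonneg i (π i) j)
        (fun i => E.P_sum i (π i))

lemma occ_summable (E : CMP S A) (π : S → A) (s : S) :
    Summable (fun t : ℕ => E.γ ^ t * Matrix.vecMul E.μ (E.polMatrix π ^ (t + 1)) s) := by
  apply Summable.of_nonneg_of_le
    (fun t => mul_nonneg (pow_nonneg E.γ_nonneg t) ((prob_iter E π t).1 s))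
    (fun t => ?_) (summable_geometric_of_lt_one E.γ_nonneg E.γ_lt_one)
  have h1 : Matrix.vecMul E.μ (E.polMatrix π ^ (t + 1)) s ≤ 1 := by
    have := (prob_iter E π t).2
    calc Matrix.vecMul E.μ (E.polMatrix π ^ (t + 1)) s
        ≤ ∑ s', Matrix.vecMul E.μ (E.polMatrix π ^ (t + 1)) s' :=
          Finset.single_le_sum (fun i _ => (prob_iter E π t).1 i) (Finset.mem_univ s)
      _ = 1 := this
  calc E.γ ^ t * Matrix.vecMul E.μ (E.polMatrix π ^ (t + 1)) s
      ≤ E.γ ^ t * 1 := by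
        exact mul_le_mul_of_nonneg_left h1 (pow_nonneg E.γ_nonneg t)
    _ = E.γ ^ t := mul_one _

lemma occ_sum_one (E : CMP S A) (π : S → A) : ∑ s, E.occupancy π s = 1 := by
  unfold CMP.occupancy
  rw [← Finset.mul_sum]
  rw [← Summable.tsum_finsetSum (fun s _ => occ_summable E π s)]
  have : ∀ t : ℕ, (∑ s, E.γ ^ t * Matrix.vecMul E.μ (E.polMatrix π ^ (t + 1)) s) = E.γ ^ t := by
    intro t
    rw [← Finset.mul_sum, (prob_iter E π t).2, mul_one]
  rw [tsum_congr this, tsum_geometric_of_lt_one E.γ_nonneg E.γ_lt_one]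
  have h1 : (1:ℝ) - E.γ ≠ 0 := by linarith [E.γ_lt_one]
  field_simp

lemma value_add_const (E : CMP S A) (Y : S → ℝ) (c : ℝ) (π : S → A) :
    E.value (fun s => Y s + c) π = E.value Y π + c := by
  unfold CMP.value
  have : ∑ s, (Y s + c) * E.occupancy π s
      = ∑ s, Y s * E.occupancy π s + c * ∑ s, E.occupancy π s := by
    rw [Finset.mul_sum, ← Finset.sum_add_distrib]
    congr 1; ext s; ring
  rw [this, occ_sum_one, mul_one]

/-- The deterministic "choose next state" environment with γ = 0 and point initial mass. -/
def Epoint (s0 : S) : CMP S S where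
  μ s := if s = s0 then 1 else 0
  μ_nonneg s := by split <;> norm_num
  μ_sum := by simp
  P _ a s' := if s' = a then 1 else 0
  P_nonneg s a s' := by split <;> norm_num
  P_sum s a := by simp
  γ := 0
  γ_nonneg := le_refl 0
  γ_lt_one := by norm_num

lemma Epoint_occ (s0 : S) (π : S → S) (s : S) :
    (Epoint s0).occupancy π s = if s = π s0 then 1 else 0 := by
  unfold CMP.occupancy
  have hγ : (Epoint s0).γ = 0 := rfl
  rw [hγ]
  rw [tsum_eq_single 0 (by intro t ht; simp [zero_pow ht])]
  simp only [pow_zero, one_mul, zero_add, pow_one, sub_zero]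
  rw [vecMul_apply']
  have : ∀ i, (Epoint s0).μ i * (Epoint s0).polMatrix π i s
      = if i = s0 then (if s = π s0 then 1 else 0) else 0 := by
    intro i
    show (if i = s0 then (1:ℝ) else 0) * (if s = π i then 1 else 0) = _
    by_cases h : i = s0 <;> simp [h]
  rw [Finset.sum_congr rfl (fun i _ => this i)]
  simp

lemma Epoint_value (s0 : S) (Y : S → ℝ) (π : S → S) :
    (Epoint s0).value Y π = Y (π s0) := by
  unfold CMP.value
  simp [Epoint_occ]

/-- θ and θ' are behaviorally equivalent in all MDP tasks iff
θ - θ' = c·1 for some c ∈ ℝ. -/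
theorem stmt3 (θ θ' : S → ℝ) (hcard : 2 ≤ Fintype.card S) :
    (∀ (A : Type) (_ : Fintype A) (E : CMP S A) (R : S → ℝ),
        {π | E.IsOptimal (fun s => R s + θ s) π} =
          {π | E.IsOptimal (fun s => R s + θ' s) π})
      ↔ ∃ c : ℝ, ∀ s, θ s - θ' s = c := by
  have hne : Nonempty S := Fintype.card_pos_iff.mp (by omega)
  constructor
  · intro H
    obtain ⟨s₀⟩ := hne
    refine ⟨θ s₀ - θ' s₀, fun s => ?_⟩
    -- show θ s - θ' s = θ s₀ - θ' s₀ for any s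
    by_cases hss : s = s₀
    · rw [hss]
    -- build reward R
    set R : S → ℝ := fun x => if x = s ∨ x = s₀ then -θ x else -θ x - 1 with hR
    have key := H S inferInstance (Epoint s₀) R
    have hY : ∀ x, R x + θ x = if x = s ∨ x = s₀ then 0 else -1 := by
      intro x; rw [hR]; by_cases h : x = s ∨ x = s₀
      · simp only [if_pos h]; ring
      · simp only [if_neg h]; ring
    have hopt : ∀ a : S, (a = s ∨ a = s₀) →
        (Epoint s₀).IsOptimal (fun x => R x + θ x) (fun _ => a) := by
      intro a ha π'
      rw [Epoint_value, Epoint_value, hY, hY]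
      simp only [ha, if_true]
      split <;> norm_num
    have h1 : (fun _ : S => s) ∈ {π | (Epoint s₀).IsOptimal (fun x => R x + θ' x) π} := by
      rw [← key]; exact hopt s (Or.inl rfl)
    have h2 : (fun _ : S => s₀) ∈ {π | (Epoint s₀).IsOptimal (fun x => R x + θ' x) π} := by
      rw [← key]; exact hopt s₀ (Or.inr rfl)
    have e1 := h1 (fun _ => s₀)
    have e2 := h2 (fun _ => s)
    rw [Epoint_value, Epoint_value] at e1 e2
    have hRs : R s = -θ s := by rw [hR]; simp
    have hRs0 : R s₀ = -θ s₀ := by rw [hR]; simp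
    rw [hRs, hRs0] at e1 e2
    linarith
  · rintro ⟨c, hc⟩ A _ E R
    have hval : ∀ π, E.value (fun s => R s + θ s) π = E.value (fun s => R s + θ' s) π + c := by
      intro π
      have : (fun s => R s + θ s) = fun s => (R s + θ' s) + c := by
        funext s; have := hc s; linarith
      rw [this, value_add_const]
    ext π
    simp only [Set.mem_setOf_eq, CMP.IsOptimal]
    constructor <;> intro h π' <;> have := h π' <;>
      rw [hval, hval] at * <;> linarith
end aux
end

section
/- Let B be a non-degenerate ellipsoid in ℝ^d centered at c, and let v ∈ ℝ^d be nonzero. Let B⁺ be the minimum-volume enclosing ellipsoid of the half-ellipsoid {u ∈ B : (u - c)^⊤ v ≥ 0}. Then vol(B⁺)/vol(B) ≤ e^{-1/(2(d+1))}. -/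
open MeasureTheory Pointwise
open scoped RealInnerProductSpace

noncomputable def projE {d : ℕ} (e : EuclideanSpace ℝ (Fin d)) :
    EuclideanSpace ℝ (Fin d) →ₗ[ℝ] EuclideanSpace ℝ (Fin d) where
  toFun x := (⟪e, x⟫) • e
  map_add' x y := by simp [inner_add_right, add_smul]
  map_smul' r x := by simp [inner_smul_right, mul_smul]

@[simp] lemma projE_apply {d : ℕ} (e x : EuclideanSpace ℝ (Fin d)) :
    projE e x = (⟪e, x⟫) • e := rfl

lemma aux_pyth {F : Type*} [NormedAddCommGroup F] [InnerProductSpace ℝ F] {e : F}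
    (he : ‖e‖ = 1) (y : F) :
    ‖y - (⟪e, y⟫) • e‖ ^ 2 = ‖y‖ ^ 2 - (⟪e, y⟫) ^ 2 := by
  have h1 : (⟪e, e⟫) = 1 := by rw [real_inner_self_eq_norm_sq, he]; norm_num
  rw [← real_inner_self_eq_norm_sq, ← real_inner_self_eq_norm_sq]
  simp only [inner_sub_left, inner_sub_right, real_inner_smul_left, real_inner_smul_right, h1,
    mul_one, real_inner_comm y e]
  ring

lemma aux_sq_le_one {a : ℝ} (h0 : 0 ≤ a) (h : a ^ 2 ≤ 1) : a ≤ 1 := by nlinarith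

lemma aux_num1 {t : ℝ} (ht0 : 0 ≤ t) (ht1 : t ≤ 1) : (2 * (t - (1 + 1)⁻¹)) ^ 2 ≤ 1 := by
  nlinarith [mul_nonneg ht0 (by linarith : (0:ℝ) ≤ 1 - t)]

lemma aux_num2 {D t s : ℝ} (hD2 : 2 ≤ D) (ht0 : 0 ≤ t) (hts : t ≤ s) (hs1 : s ≤ 1)
    (hs0 : 0 ≤ s) :
    ((D + 1) / D * (t - (D + 1)⁻¹)) ^ 2 + (D ^ 2 - 1) / D ^ 2 * (s ^ 2 - t ^ 2) ≤ 1 := by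
  have h1 : D ≠ 0 := by linarith
  have h2 : D + 1 ≠ 0 := by linarith
  have ht1 : t ≤ 1 := by linarith
  have hkey : ((D + 1) / D * (t - (D + 1)⁻¹)) ^ 2 + (D ^ 2 - 1) / D ^ 2 * (s ^ 2 - t ^ 2)
      = (((D + 1) * t - 1) ^ 2 + (D ^ 2 - 1) * (s ^ 2 - t ^ 2)) / D ^ 2 := by
    field_simp
  rw [hkey, div_le_one (by positivity)]
  have hA : 0 ≤ (D + 1) * (t * (1 - t)) :=
    mul_nonneg (by linarith) (mul_nonneg ht0 (by linarith))
  have hB : 0 ≤ (D ^ 2 - 1) * (1 - s ^ 2) :=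
    mul_nonneg (by nlinarith) (by nlinarith)
  nlinarith [hA, hB]

lemma aux_det_bound {D : ℝ} (n : ℕ) (hD2 : 2 ≤ D) (hn : (n : ℝ) = D - 1) :
    D / (D + 1) * (D / Real.sqrt (D ^ 2 - 1)) ^ n ≤ Real.exp (-1 / (2 * (D + 1))) := by
  have h21 : (0:ℝ) < D ^ 2 - 1 := by nlinarith
  have hs : 0 < Real.sqrt (D ^ 2 - 1) := Real.sqrt_pos.2 h21
  have hβ : 0 < D / Real.sqrt (D ^ 2 - 1) := by positivity
  have hD1 : (0:ℝ) < D + 1 := by linarith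
  have h1 : D / (D + 1) ≤ Real.exp (-1 / (D + 1)) := by
    have he := Real.add_one_le_exp (-1 / (D + 1))
    have heq : -1 / (D + 1) + 1 = D / (D + 1) := by field_simp; ring
    linarith
  have h2 : D / Real.sqrt (D ^ 2 - 1) ≤ Real.exp (1 / (2 * (D ^ 2 - 1))) := by
    have hsq : (D / Real.sqrt (D ^ 2 - 1)) ^ 2 = D ^ 2 / (D ^ 2 - 1) := by
      rw [div_pow, Real.sq_sqrt h21.le]
    have hexp2 : Real.exp (1 / (2 * (D ^ 2 - 1))) ^ 2 = Real.exp (1 / (D ^ 2 - 1)) := by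
      rw [sq, ← Real.exp_add]
      congr 1
      rw [← add_div, div_eq_div_iff (by positivity) (ne_of_gt h21)]
      ring
    have hle : (D / Real.sqrt (D ^ 2 - 1)) ^ 2 ≤ Real.exp (1 / (2 * (D ^ 2 - 1))) ^ 2 := by
      rw [hsq, hexp2]
      have he := Real.add_one_le_exp (1 / (D ^ 2 - 1))
      have heq : D ^ 2 / (D ^ 2 - 1) = 1 / (D ^ 2 - 1) + 1 := by field_simp; ring
      linarith
    calc D / Real.sqrt (D ^ 2 - 1) = Real.sqrt ((D / Real.sqrt (D ^ 2 - 1)) ^ 2) :=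
          (Real.sqrt_sq hβ.le).symm
    _ ≤ Real.sqrt (Real.exp (1 / (2 * (D ^ 2 - 1))) ^ 2) := Real.sqrt_le_sqrt hle
    _ = Real.exp (1 / (2 * (D ^ 2 - 1))) := Real.sqrt_sq (Real.exp_pos _).le
  have h3 : (D / Real.sqrt (D ^ 2 - 1)) ^ n ≤ Real.exp ((n : ℝ) * (1 / (2 * (D ^ 2 - 1)))) := by
    calc (D / Real.sqrt (D ^ 2 - 1)) ^ n ≤ Real.exp (1 / (2 * (D ^ 2 - 1))) ^ n :=
          pow_le_pow_left₀ hβ.le h2 n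
    _ = Real.exp ((n : ℝ) * (1 / (2 * (D ^ 2 - 1)))) := by rw [← Real.exp_nat_mul]
  have h4 : (n : ℝ) * (1 / (2 * (D ^ 2 - 1))) = 1 / (2 * (D + 1)) := by
    rw [hn]
    have hne1 : (2:ℝ) * (D ^ 2 - 1) ≠ 0 := by positivity
    have hne2 : (2:ℝ) * (D + 1) ≠ 0 := by positivity
    field_simp
    ring
  rw [h4] at h3
  calc D / (D + 1) * (D / Real.sqrt (D ^ 2 - 1)) ^ n
      ≤ Real.exp (-1 / (D + 1)) * Real.exp (1 / (2 * (D + 1))) :=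
        mul_le_mul h1 h3 (by positivity) (Real.exp_pos _).le
  _ = Real.exp (-1 / (D + 1) + 1 / (2 * (D + 1))) := (Real.exp_add _ _).symm
  _ = Real.exp (-1 / (2 * (D + 1))) := by
      congr 1
      field_simp
      ring

lemma aux_main (d : ℕ) (hd : 1 ≤ d) (e : EuclideanSpace ℝ (Fin d)) (he : ‖e‖ = 1) :
    ∃ M : EuclideanSpace ℝ (Fin d) ≃ₗ[ℝ] EuclideanSpace ℝ (Fin d),
      (∀ x : EuclideanSpace ℝ (Fin d), ‖x‖ ≤ 1 → 0 ≤ ⟪e, x⟫ →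
        ∃ y, ‖y‖ ≤ 1 ∧ ((d : ℝ) + 1)⁻¹ • e + M y = x) ∧
      |LinearMap.det (M : EuclideanSpace ℝ (Fin d) →ₗ[ℝ] EuclideanSpace ℝ (Fin d))|
        ≤ Real.exp (-1 / (2 * ((d : ℝ) + 1))) := by
  have hee : (⟪e, e⟫) = 1 := by rw [real_inner_self_eq_norm_sq, he]; norm_num
  obtain ⟨D, hDdef⟩ : ∃ D : ℝ, ((d : ℝ)) = D := ⟨_, rfl⟩
  rw [hDdef]
  have hD1 : 1 ≤ D := by rw [← hDdef]; exact_mod_cast hd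
  have hD0 : 0 < D := by linarith
  obtain ⟨α, hαdef⟩ : ∃ a : ℝ, D / (D + 1) = a := ⟨_, rfl⟩
  obtain ⟨β, hβdef⟩ : ∃ b : ℝ, (if d = 1 then 1 else D / Real.sqrt (D ^ 2 - 1)) = b := ⟨_, rfl⟩
  have hα : 0 < α := by rw [← hαdef]; positivity
  have hβ : 0 < β := by
    rw [← hβdef]; split_ifs with h
    · norm_num
    · have hd2 : 2 ≤ d := by omega
      have hD2 : (2 : ℝ) ≤ D := by rw [← hDdef]; exact_mod_cast hd2
      have hs : 0 < Real.sqrt (D ^ 2 - 1) := Real.sqrt_pos.2 (by nlinarith)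
      positivity
  have hα1 : α⁻¹ = (D + 1) / D := by rw [← hαdef, inv_div]
  obtain ⟨Mlin, hMdef⟩ : ∃ f, (β • (LinearMap.id : EuclideanSpace ℝ (Fin d) →ₗ[ℝ]
      EuclideanSpace ℝ (Fin d)) + (α - β) • projE e) = f := ⟨_, rfl⟩
  obtain ⟨Nlin, hNdef⟩ : ∃ f, (β⁻¹ • (LinearMap.id : EuclideanSpace ℝ (Fin d) →ₗ[ℝ]
      EuclideanSpace ℝ (Fin d)) + (α⁻¹ - β⁻¹) • projE e) = f := ⟨_, rfl⟩
  have hMapp : ∀ x, Mlin x = β • x + (α - β) • ((⟪e, x⟫) • e) := fun x => by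
    rw [← hMdef]; simp
  have hNapp : ∀ x, Nlin x = β⁻¹ • x + (α⁻¹ - β⁻¹) • ((⟪e, x⟫) • e) := fun x => by
    rw [← hNdef]; simp
  have hMN : ∀ x, Mlin (Nlin x) = x := by
    intro x
    rw [hMapp, hNapp]
    simp only [inner_add_right, real_inner_smul_right, hee, mul_one]
    match_scalars <;> field_simp <;> ring
  have hNM : ∀ x, Nlin (Mlin x) = x := by
    intro x
    rw [hNapp, hMapp]
    simp only [inner_add_right, real_inner_smul_right, hee, mul_one]
    match_scalars <;> field_simp <;> ring
  refine ⟨LinearEquiv.ofLinear Mlin Nlin (LinearMap.ext hMN) (LinearMap.ext hNM), ?_, ?_⟩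
  · -- containment
    intro x hx hex
    obtain ⟨t, htdef⟩ : ∃ t : ℝ, (⟪e, x⟫) = t := ⟨_, rfl⟩
    rw [htdef] at hex
    have htx : t ≤ ‖x‖ := by
      calc t = ⟪e, x⟫ := htdef.symm
      _ ≤ ‖e‖ * ‖x‖ := real_inner_le_norm e x
      _ = ‖x‖ := by rw [he, one_mul]
    have ht1 : t ≤ 1 := htx.trans hx
    refine ⟨Nlin (x - (D + 1)⁻¹ • e), ?_, ?_⟩
    · -- norm bound
      have hty : (⟪e, x - (D + 1)⁻¹ • e⟫) = t - (D + 1)⁻¹ := by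
        rw [inner_sub_right, real_inner_smul_right, hee, mul_one, htdef]
      have hydecomp : Nlin (x - (D + 1)⁻¹ • e)
          = (α⁻¹ * (t - (D + 1)⁻¹)) • e + β⁻¹ • (x - t • e) := by
        rw [hNapp, hty]
        match_scalars <;> ring
      have horth : (⟪(α⁻¹ * (t - (D + 1)⁻¹)) • e, β⁻¹ • (x - t • e)⟫) = 0 := by
        rw [real_inner_smul_left, real_inner_smul_right, inner_sub_right,
          real_inner_smul_right, hee, mul_one, htdef, sub_self, mul_zero, mul_zero]
      have hxte : ‖x - t • e‖ ^ 2 = ‖x‖ ^ 2 - t ^ 2 := by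
        have := aux_pyth he x
        rw [htdef] at this
        exact this
      have hnorm2 : ‖Nlin (x - (D + 1)⁻¹ • e)‖ ^ 2
          = (α⁻¹ * (t - (D + 1)⁻¹)) ^ 2 + β⁻¹ ^ 2 * (‖x‖ ^ 2 - t ^ 2) := by
        rw [hydecomp, norm_add_sq_real, horth, mul_zero, add_zero, norm_smul, norm_smul,
          Real.norm_eq_abs, Real.norm_eq_abs, he, mul_one, mul_pow, sq_abs, sq_abs, hxte]
      have hyle : ‖Nlin (x - (D + 1)⁻¹ • e)‖ ^ 2 ≤ 1 := by
        by_cases hcase : d = 1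
        · -- dimension 1 : x is a multiple of e
          have hfr : Module.finrank ℝ (EuclideanSpace ℝ (Fin d)) = 1 := by
            rw [finrank_euclideanSpace]; simp [hcase]
          have hne : e ≠ 0 := by
            intro h0; rw [h0, norm_zero] at he; norm_num at he
          have hspan : Submodule.span ℝ ({e} : Set (EuclideanSpace ℝ (Fin d))) = ⊤ := by
            apply Submodule.eq_top_of_finrank_eq
            rw [finrank_span_singleton hne, hfr]
          obtain ⟨r, hr⟩ : ∃ r : ℝ, r • e = x := by
            have hx' : x ∈ Submodule.span ℝ ({e} : Set (EuclideanSpace ℝ (Fin d))) := by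
              rw [hspan]; trivial
            exact (Submodule.mem_span_singleton.1 hx')
          have hzero : ‖x‖ ^ 2 - t ^ 2 = 0 := by
            rw [← hxte]
            have hz : x - t • e = 0 := by
              rw [← htdef, ← hr, real_inner_smul_right, hee, mul_one, sub_self]
            rw [hz, norm_zero]
            norm_num
          have hDone : D = 1 := by rw [← hDdef, hcase]; norm_num
          have hαval : α⁻¹ = 2 := by rw [hα1, hDone]; norm_num
          rw [hnorm2, hzero, mul_zero, add_zero, hαval, hDone, mul_pow]
          have := aux_num1 hex ht1
          rw [mul_pow] at this
          exact this
        · have hd2 : 2 ≤ d := by omega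
          have hD2 : (2 : ℝ) ≤ D := by rw [← hDdef]; exact_mod_cast hd2
          have h21 : (0:ℝ) ≤ D ^ 2 - 1 := by nlinarith [hD2]
          have hβval : β⁻¹ ^ 2 = (D ^ 2 - 1) / D ^ 2 := by
            rw [← hβdef, if_neg hcase, inv_div, div_pow, Real.sq_sqrt h21]
          rw [hnorm2, hα1, hβval]
          exact aux_num2 hD2 hex htx hx (norm_nonneg x)
      exact aux_sq_le_one (norm_nonneg _) hyle
    · -- equality
      show (D + 1)⁻¹ • e + Mlin (Nlin (x - (D + 1)⁻¹ • e)) = x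
      rw [hMN]
      abel
  · -- determinant bound
    show |LinearMap.det Mlin| ≤ _
    classical
    have hβ0 : β ≠ 0 := ne_of_gt hβ
    have hnorm1 : (∑ i, e i * e i) = 1 := by
      rw [PiLp.inner_apply] at hee
      simpa [sq] using hee
    have hdet : LinearMap.det Mlin = α * β ^ (d - 1) := by
      set b := (EuclideanSpace.basisFun (Fin d) ℝ).toBasis with hbdef
      rw [← LinearMap.det_toMatrix b]
      have hmat : LinearMap.toMatrix b b Mlin
          = β • ((1 : Matrix (Fin d) (Fin d) ℝ)
              + Matrix.vecMulVec (fun i => ((α - β) / β) * e i) (fun i => e i)) := by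
        ext i j
        rw [LinearMap.toMatrix_apply]
        rw [hbdef]
        rw [OrthonormalBasis.coe_toBasis_repr_apply, OrthonormalBasis.coe_toBasis,
          EuclideanSpace.basisFun_apply, EuclideanSpace.basisFun_repr, hMapp]
        have hinner : (⟪e, EuclideanSpace.single j (1:ℝ)⟫) = e j := by
          rw [EuclideanSpace.inner_single_right]
          simp
        rw [hinner]
        simp only [PiLp.add_apply, PiLp.smul_apply, smul_eq_mul, Matrix.smul_apply,
          Matrix.add_apply, Matrix.vecMulVec_apply, Matrix.one_apply,
          EuclideanSpace.single_apply]
        by_cases hij : i = j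
        · subst hij
          simp only [if_pos rfl]
          field_simp
        · field_simp
      rw [hmat]
      rw [Matrix.vecMulVec_eq (Fin 1)]
      rw [Matrix.det_smul, Matrix.det_one_add_replicateCol_mul_replicateRow, Fintype.card_fin]
      have hdot : dotProduct (fun i => e i) (fun i => ((α - β) / β) * e i)
          = (α - β) / β := by
        have h5 : dotProduct (fun i => e i) (fun i => ((α - β) / β) * e i)
            = ((α - β) / β) * ∑ i, e i * e i := by
          rw [dotProduct, Finset.mul_sum]
          exact Finset.sum_congr rfl fun i _ => by ring
        rw [h5, hnorm1, mul_one]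
      rw [hdot]
      have hβd : β ^ d = β ^ (d - 1) * β := by
        rw [← pow_succ, Nat.sub_add_cancel hd]
      rw [hβd]
      field_simp
      ring
    rw [hdet, abs_of_pos (mul_pos hα (pow_pos hβ _))]
    by_cases hcase : d = 1
    · have hDone : D = 1 := by rw [← hDdef, hcase]; norm_num
      have hβ1 : β = 1 := by rw [← hβdef, if_pos hcase]
      rw [hcase, hβ1, ← hαdef, hDone]
      have he4 := Real.add_one_le_exp (-1 / (2 * ((1:ℝ) + 1)))
      norm_num at he4 ⊢
      linarith
    · have hd2 : 2 ≤ d := by omega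
      have hD2 : (2 : ℝ) ≤ D := by rw [← hDdef]; exact_mod_cast hd2
      have hn : ((d - 1 : ℕ) : ℝ) = D - 1 := by
        rw [Nat.cast_sub hd, ← hDdef]
        norm_num
      rw [← hαdef, ← hβdef, if_neg hcase]
      exact aux_det_bound (d - 1) hD2 hn

lemma aux_vol {d : ℕ} (c : EuclideanSpace ℝ (Fin d))
    (f : EuclideanSpace ℝ (Fin d) →ₗ[ℝ] EuclideanSpace ℝ (Fin d))
    (s : Set (EuclideanSpace ℝ (Fin d))) :
    volume ((fun u => c + f u) '' s) = ENNReal.ofReal |LinearMap.det f| * volume s := by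
  have h : (fun u => c + f u) '' s = c +ᵥ (f '' s) := by
    rw [← Set.image_vadd, Set.image_image]; rfl
  rw [h, measure_vadd, Measure.addHaar_image_linearMap]



open MeasureTheory

/-- An ellipsoid in ℝ^d: the image of the closed unit Euclidean ball under an
invertible affine map (non-degenerate since the linear part is invertible). -/
def IsEllipsoid {d : ℕ} (E : Set (EuclideanSpace ℝ (Fin d))) : Prop :=
  ∃ (c : EuclideanSpace ℝ (Fin d))
    (L : EuclideanSpace ℝ (Fin d) ≃ₗ[ℝ] EuclideanSpace ℝ (Fin d)),
    E = (fun u => c + L u) '' Metric.closedBall 0 1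

/-- central-cut volume reduction for the ellipsoid method.  If B is
a non-degenerate ellipsoid centered at c, v ≠ 0, and B⁺ is a minimum-volume
enclosing ellipsoid of the half-ellipsoid {u ∈ B : (u-c)ᵀv ≥ 0}, then
vol(B⁺) ≤ e^(-1/(2(d+1))) · vol(B). -/
theorem stmt4 (d : ℕ) (c : EuclideanSpace ℝ (Fin d))
    (L : EuclideanSpace ℝ (Fin d) ≃ₗ[ℝ] EuclideanSpace ℝ (Fin d))
    (v : EuclideanSpace ℝ (Fin d)) (hv : v ≠ 0)
    (B : Set (EuclideanSpace ℝ (Fin d)))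
    (hB : B = (fun u => c + L u) '' Metric.closedBall 0 1)
    (Bplus : Set (EuclideanSpace ℝ (Fin d)))
    (hBplusEll : IsEllipsoid Bplus)
    (hsub : {u ∈ B | 0 ≤ ∑ i, v i * (u i - c i)} ⊆ Bplus)
    (hmin : ∀ E' : Set (EuclideanSpace ℝ (Fin d)), IsEllipsoid E' →
      {u ∈ B | 0 ≤ ∑ i, v i * (u i - c i)} ⊆ E' → volume Bplus ≤ volume E') :
    volume Bplus ≤ ENNReal.ofReal (Real.exp (-1 / (2 * (d + 1)))) * volume B := by
  rcases Nat.eq_zero_or_pos d with hd0 | hd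
  · subst hd0
    exact absurd (PiLp.ext fun i => i.elim0) hv
  set w := (LinearMap.adjoint
      (L : EuclideanSpace ℝ (Fin d) →ₗ[ℝ] EuclideanSpace ℝ (Fin d))) v with hwdef
  have hwv : ∀ x, (⟪w, x⟫) = ⟪v, L x⟫ := fun x => by
    rw [hwdef, LinearMap.adjoint_inner_left]
    rfl
  have hw : w ≠ 0 := by
    intro h0
    apply hv
    have h1 := hwv (L.symm v)
    rw [h0, inner_zero_left, LinearEquiv.apply_symm_apply] at h1
    exact inner_self_eq_zero.mp h1.symm
  set e : EuclideanSpace ℝ (Fin d) := ‖w‖⁻¹ • w with hedef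
  have he : ‖e‖ = 1 := norm_smul_inv_norm hw
  obtain ⟨M, hMcont, hMdet⟩ := aux_main d hd e he
  set c' : EuclideanSpace ℝ (Fin d) := c + L (((d : ℝ) + 1)⁻¹ • e) with hc'def
  set L' := M.trans L with hL'def
  set E' : Set (EuclideanSpace ℝ (Fin d)) :=
    (fun u => c' + L' u) '' Metric.closedBall 0 1 with hE'def
  have hE'ell : IsEllipsoid E' := ⟨c', L', rfl⟩
  have hsubE' : {u ∈ B | 0 ≤ ∑ i, v i * (u i - c i)} ⊆ E' := by
    rintro u ⟨huB, hcond⟩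
    rw [hB] at huB
    obtain ⟨x, hx, rfl⟩ := huB
    have hx1 : ‖x‖ ≤ 1 := by
      rwa [Metric.mem_closedBall, dist_zero_right] at hx
    have hinner : (0 : ℝ) ≤ ⟪e, x⟫ := by
      have hsum : ∑ i, v i * ((c + L x) i - c i) = ⟪v, L x⟫ := by
        rw [PiLp.inner_apply]
        refine Finset.sum_congr rfl fun i _ => ?_
        simp [PiLp.add_apply, mul_comm]
      have h2 : (0:ℝ) ≤ ⟪v, L x⟫ := by rw [← hsum]; exact hcond
      have h3 : (0:ℝ) ≤ ⟪w, x⟫ := by rw [hwv]; exact h2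
      rw [hedef, real_inner_smul_left]
      positivity
    obtain ⟨y, hy1, hyx⟩ := hMcont x hx1 hinner
    refine ⟨y, ?_, ?_⟩
    · rwa [Metric.mem_closedBall, dist_zero_right]
    · show c' + L' y = c + L x
      rw [hc'def, hL'def]
      show c + L (((d : ℝ) + 1)⁻¹ • e) + L (M y) = c + L x
      rw [add_assoc, ← map_add, hyx]
  have hvolB : volume B = ENNReal.ofReal
      |LinearMap.det (L : EuclideanSpace ℝ (Fin d) →ₗ[ℝ] EuclideanSpace ℝ (Fin d))|
      * volume (Metric.closedBall (0 : EuclideanSpace ℝ (Fin d)) 1) := by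
    rw [hB]; exact aux_vol c _ _
  have hvolE' : volume E' = ENNReal.ofReal
      |LinearMap.det (L' : EuclideanSpace ℝ (Fin d) →ₗ[ℝ] EuclideanSpace ℝ (Fin d))|
      * volume (Metric.closedBall (0 : EuclideanSpace ℝ (Fin d)) 1) := by
    rw [hE'def]; exact aux_vol c' _ _
  have hdet' : LinearMap.det (L' : EuclideanSpace ℝ (Fin d) →ₗ[ℝ] EuclideanSpace ℝ (Fin d))
      = LinearMap.det (L : EuclideanSpace ℝ (Fin d) →ₗ[ℝ] EuclideanSpace ℝ (Fin d))
        * LinearMap.det (M : EuclideanSpace ℝ (Fin d) →ₗ[ℝ] EuclideanSpace ℝ (Fin d)) := by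
    rw [hL'def, LinearEquiv.coe_trans, LinearMap.det_comp]
  calc volume Bplus ≤ volume E' := hmin E' hE'ell hsubE'
  _ = ENNReal.ofReal
      (|LinearMap.det (M : EuclideanSpace ℝ (Fin d) →ₗ[ℝ] EuclideanSpace ℝ (Fin d))|
        * |LinearMap.det (L : EuclideanSpace ℝ (Fin d) →ₗ[ℝ] EuclideanSpace ℝ (Fin d))|)
      * volume (Metric.closedBall (0 : EuclideanSpace ℝ (Fin d)) 1) := by
      rw [hvolE', hdet', abs_mul, mul_comm (|_|) (|_|)]
  _ = ENNReal.ofReal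
      |LinearMap.det (M : EuclideanSpace ℝ (Fin d) →ₗ[ℝ] EuclideanSpace ℝ (Fin d))|
      * volume B := by
      rw [ENNReal.ofReal_mul (abs_nonneg _), hvolB, mul_assoc]
  _ ≤ ENNReal.ofReal (Real.exp (-1 / (2 * ((d : ℝ) + 1)))) * volume B :=
      mul_le_mul_left (ENNReal.ofReal_le_ofReal hMdet) _
end

section
/- In the ellipsoid algorithm for repeated inverse RL, suppose at round t a mistake occurs, i.e., (θ⋆ + R_t)^⊤(x^{a⋆} - x^{a_t}) > ε, while the learner played greedily with respect to c_t + R_t, i.e., (c_t + R_t)^⊤(x^{a⋆} - x^{a_t}) ≤ 0. Then any θ eliminated by the cut (i.e., satisfying (θ - c_t)^⊤(x^{a⋆} - x^{a_t}) < 0) satisfies ‖θ⋆ - θ‖_∞ > ε/2, provided ‖x^{a⋆}‖₁ ≤ 1 and ‖x^{a_t}‖₁ ≤ 1. -/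
/-- if a mistake occurs ((θ⋆+R)ᵀ(x^{a⋆}-x^{a}) > ε) while the
learner played greedily w.r.t. c + R, then any θ eliminated by the central cut
satisfies ‖θ⋆ - θ‖_∞ > ε/2, provided the feature vectors have ℓ₁ norm ≤ 1.
(The norm on `Fin d → ℝ` is the sup norm.) -/
theorem stmt6 (d : ℕ) (ε : ℝ) (θs c θ R xstar xa : Fin d → ℝ)
    (hxstar : ∑ i, |xstar i| ≤ 1) (hxa : ∑ i, |xa i| ≤ 1)
    (hmistake : ε < ∑ i, (θs i + R i) * (xstar i - xa i))
    (hgreedy : ∑ i, (c i + R i) * (xstar i - xa i) ≤ 0)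
    (helim : ∑ i, (θ i - c i) * (xstar i - xa i) < 0) :
    ε / 2 < ‖θs - θ‖ := by
  have h1 : ε < ∑ i, (θs i - θ i) * (xstar i - xa i) := by
    have e : ∀ i ∈ Finset.univ, (θs i - θ i) * (xstar i - xa i)
        = (θs i + R i) * (xstar i - xa i) - (c i + R i) * (xstar i - xa i)
          - (θ i - c i) * (xstar i - xa i) := by intro i _; ring
    rw [Finset.sum_congr rfl e, Finset.sum_sub_distrib, Finset.sum_sub_distrib]
    linarith
  have h2 : ∑ i, (θs i - θ i) * (xstar i - xa i) ≤ ‖θs - θ‖ * 2 := by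
    have hb : ∀ i ∈ Finset.univ, (θs i - θ i) * (xstar i - xa i)
        ≤ ‖θs - θ‖ * |xstar i - xa i| := by
      intro i _
      calc (θs i - θ i) * (xstar i - xa i)
          ≤ |(θs i - θ i) * (xstar i - xa i)| := le_abs_self _
        _ = |θs i - θ i| * |xstar i - xa i| := abs_mul _ _
        _ ≤ ‖θs - θ‖ * |xstar i - xa i| := by
            have : |θs i - θ i| ≤ ‖θs - θ‖ := by
              have := norm_le_pi_norm (θs - θ) i
              simpa using this
            exact mul_le_mul_of_nonneg_right this (abs_nonneg _)
    calc ∑ i, (θs i - θ i) * (xstar i - xa i)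
        ≤ ∑ i, ‖θs - θ‖ * |xstar i - xa i| := Finset.sum_le_sum hb
      _ = ‖θs - θ‖ * ∑ i, |xstar i - xa i| := by rw [Finset.mul_sum]
      _ ≤ ‖θs - θ‖ * 2 := by
          apply mul_le_mul_of_nonneg_left _ (norm_nonneg _)
          have : ∑ i, |xstar i - xa i| ≤ ∑ i, (|xstar i| + |xa i|) :=
            Finset.sum_le_sum fun i _ => abs_sub _ _
          rw [Finset.sum_add_distrib] at this
          linarith
  linarith
end

section
/- Let (X, R) be a linear bandit task with K actions where each feature vector x^{(a)} ∈ ℝ^d is entrywise non-negative with ‖x^{(a)}‖₁ ≤ 1. Then there exists an MDP with d+1 states and K actions, with a designated initial state s_ref, such that for each action a, the policy taking a in s_ref has normalized discounted state occupancy equal to 1 - ‖x^{(a)}‖₁ on s_ref and equal to x^{(a)}(j) on the j-th other state. -/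
variable {S A : Type} [Fintype S] [DecidableEq S]

noncomputable def stmt7E (d K : ℕ) (γ : ℝ) (hγ0 : 0 ≤ γ) (hγ1 : γ < 1)
    (x : Fin K → Fin d → ℝ) (hx0 : ∀ a j, 0 ≤ x a j)
    (hx1 : ∀ a, ∑ j, x a j ≤ 1) : CMP (Option (Fin d)) (Fin K) where
  μ := fun s => if s = none then 1 else 0
  μ_nonneg := by intro s; split <;> norm_num
  μ_sum := by simp [Fintype.sum_option]
  P := fun s a s' => match s, s' with
    | none, none => (1 - ∑ j, x a j) / (1 - γ * ∑ j, x a j)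
    | none, some j => (1 - γ) * x a j / (1 - γ * ∑ j, x a j)
    | some j, s' => if s' = some j then 1 else 0
  P_nonneg := by
    intro s a s'
    have hD : (0:ℝ) < 1 - γ * ∑ j, x a j := by
      nlinarith [Finset.sum_nonneg fun j (_ : j ∈ Finset.univ) => hx0 a j, hx1 a]
    match s, s' with
    | none, none => exact div_nonneg (by linarith [hx1 a]) hD.le
    | none, some j => exact div_nonneg (mul_nonneg (by linarith) (hx0 a j)) hD.le
    | some j, s' => dsimp only; split <;> norm_num
  P_sum := by
    intro s a
    have hD : (0:ℝ) < 1 - γ * ∑ j, x a j := by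
      nlinarith [Finset.sum_nonneg fun j (_ : j ∈ Finset.univ) => hx0 a j, hx1 a]
    match s with
    | none =>
      rw [Fintype.sum_option]
      dsimp only
      rw [← Finset.sum_div, ← Finset.mul_sum]
      rw [← add_div, div_eq_one_iff_eq hD.ne']
      ring
    | some j => simp
  γ := γ
  γ_nonneg := hγ0
  γ_lt_one := hγ1

/-- any linear bandit task with non-negative features of ℓ₁ norm
at most 1 can be emulated by an MDP with d+1 states (states = Option (Fin d),
with `none` the reference/initial state): for each action `a`, any policy taking
`a` at the initial state has occupancy `1 - ‖x^a‖₁` at the initial state and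
`x^a j` at the j-th other state. -/
theorem stmt7 (d K : ℕ) (γ : ℝ) (hγ0 : 0 ≤ γ) (hγ1 : γ < 1)
    (x : Fin K → Fin d → ℝ) (hx0 : ∀ a j, 0 ≤ x a j)
    (hx1 : ∀ a, ∑ j, x a j ≤ 1) :
    ∃ E : CMP (Option (Fin d)) (Fin K),
      E.γ = γ ∧ E.μ = (fun s => if s = none then 1 else 0) ∧
      ∀ (a : Fin K) (π : Option (Fin d) → Fin K), π none = a →
        E.occupancy π none = 1 - ∑ j, x a j ∧
        ∀ j, E.occupancy π (some j) = x a j := by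
  have hγ1' : (0:ℝ) < 1 - γ := by linarith
  have hX0 : ∀ a, 0 ≤ ∑ j, x a j := fun a => Finset.sum_nonneg fun j _ => hx0 a j
  set E : CMP (Option (Fin d)) (Fin K) := stmt7E d K γ hγ0 hγ1 x hx0 hx1 with hE
  refine ⟨E, rfl, rfl, ?_⟩
  intro a π hπ
  set X : ℝ := ∑ j, x a j with hXdef
  set D : ℝ := 1 - γ * X with hDdef
  have hD' : 0 < D := by nlinarith [hX0 a, hx1 a]
  set p : ℝ := (1 - X) / D with hpdef
  set q : Fin d → ℝ := fun j => (1 - γ) * x a j / D with hqdef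
  have hp0 : 0 ≤ p := div_nonneg (by linarith [hx1 a]) hD'.le
  have hp1 : p ≤ 1 := by
    rw [hpdef, div_le_one hD']
    nlinarith [hX0 a]
  have hγp : γ * p < 1 := lt_of_le_of_lt (by nlinarith) hγ1
  have hγp0 : 0 ≤ γ * p := mul_nonneg hγ0 hp0
  have hMnn : (E.polMatrix π) none none = p := by
    simp [CMP.polMatrix, E, stmt7E, hπ]; rfl
  have hMnj : ∀ j, (E.polMatrix π) none (some j) = q j := by
    intro j; simp [CMP.polMatrix, E, stmt7E, hπ, q]; rfl
  have hMjn : ∀ j : Fin d, (E.polMatrix π) (some j) none = 0 := by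
    intro j; simp [CMP.polMatrix, E, stmt7E]
  have hMjj : ∀ i j : Fin d, (E.polMatrix π) (some i) (some j) = if i = j then 1 else 0 := by
    intro i j; by_cases h : i = j <;> simp [CMP.polMatrix, E, stmt7E, h, eq_comm]
  have hμ : E.μ = fun s => if s = none then 1 else 0 := rfl
  have hγE : E.γ = γ := rfl
  have key : ∀ t : ℕ,
      Matrix.vecMul E.μ (E.polMatrix π ^ (t + 1)) none = p ^ (t + 1) ∧
      ∀ j, Matrix.vecMul E.μ (E.polMatrix π ^ (t + 1)) (some j)
        = q j * ∑ i ∈ Finset.range (t + 1), p ^ i := by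
    intro t
    induction t with
    | zero =>
      constructor
      · rw [pow_one, show Matrix.vecMul E.μ (E.polMatrix π) none
            = ∑ s, E.μ s * (E.polMatrix π) s none by simp [Matrix.vecMul, dotProduct],
          Fintype.sum_option, hμ]
        simp [hMnn, hMjn]
      · intro j
        rw [pow_one, show Matrix.vecMul E.μ (E.polMatrix π) (some j)
            = ∑ s, E.μ s * (E.polMatrix π) s (some j) by simp [Matrix.vecMul, dotProduct],
          Fintype.sum_option, hμ]
        simp [hMnj, hMjj]
    | succ n ih =>
      have hpow : (E.polMatrix π) ^ (n + 1 + 1) = (E.polMatrix π) ^ (n + 1) * E.polMatrix π :=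
        pow_succ _ _
      constructor
      · rw [hpow, ← Matrix.vecMul_vecMul]
        rw [show Matrix.vecMul (Matrix.vecMul E.μ (E.polMatrix π ^ (n+1))) (E.polMatrix π) none
            = ∑ s, Matrix.vecMul E.μ (E.polMatrix π ^ (n+1)) s * (E.polMatrix π) s none by
          simp [Matrix.vecMul, dotProduct]]
        rw [Fintype.sum_option]
        simp only [hMjn, mul_zero, Finset.sum_const_zero, add_zero]
        rw [ih.1, hMnn]
        ring
      · intro j
        rw [hpow, ← Matrix.vecMul_vecMul]
        rw [show Matrix.vecMul (Matrix.vecMul E.μ (E.polMatrix π ^ (n+1))) (E.polMatrix π) (some j)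
            = ∑ s, Matrix.vecMul E.μ (E.polMatrix π ^ (n+1)) s * (E.polMatrix π) s (some j) by
          simp [Matrix.vecMul, dotProduct]]
        rw [Fintype.sum_option, ih.1, hMnj]
        have : ∑ i, Matrix.vecMul E.μ (E.polMatrix π ^ (n+1)) (some i) * (E.polMatrix π) (some i) (some j)
            = q j * ∑ i ∈ Finset.range (n + 1), p ^ i := by
          rw [Finset.sum_eq_single j]
          · rw [(ih.2 j), hMjj, if_pos rfl, mul_one]
          · intro b _ hb; rw [hMjj, if_neg hb, mul_zero]
          · intro h; exact absurd (Finset.mem_univ j) h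
        have hgs : ∑ i ∈ Finset.range (n + 1 + 1), p ^ i
            = p ^ (n + 1) + ∑ i ∈ Finset.range (n + 1), p ^ i := geom_sum_succ'
        rw [this, hgs]
        ring
  constructor
  · -- occupancy at none
    unfold CMP.occupancy
    have hc : ∀ t : ℕ, E.γ ^ t * Matrix.vecMul E.μ (E.polMatrix π ^ (t + 1)) none
        = p * (γ * p) ^ t := by
      intro t
      rw [(key t).1, hγE, mul_pow]
      ring
    rw [tsum_congr hc, tsum_mul_left, tsum_geometric_of_lt_one hγp0 hγp, hγE]
    have h1 : 1 - γ * p ≠ 0 := by linarith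
    have hγpv : 1 - γ * p = (1 - γ) / D := by
      rw [hpdef, hDdef]
      field_simp [show (1 - γ * X) ≠ 0 from hD'.ne']
      ring
    rw [hγpv, hpdef]
    field_simp
  · -- occupancy at some j
    intro j
    unfold CMP.occupancy
    by_cases hX : X = 0
    · have hxj : ∀ i, x a i = 0 := fun i =>
        (Finset.sum_eq_zero_iff_of_nonneg (fun i _ => hx0 a i)).1 hX i (Finset.mem_univ i)
      have hq0 : q j = 0 := by simp [q, hxj]
      have hc : ∀ t : ℕ, E.γ ^ t * Matrix.vecMul E.μ (E.polMatrix π ^ (t + 1)) (some j) = 0 := by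
        intro t; rw [(key t).2 j, hq0]; ring
      rw [tsum_congr hc, tsum_zero, hxj]
      ring
    · have hXpos : 0 < X := lt_of_le_of_ne (hX0 a) (Ne.symm hX)
      have hplt : p < 1 := by
        rw [hpdef, div_lt_one hD']
        nlinarith
      have hpne : p - 1 ≠ 0 := by linarith
      have hsum1 : Summable fun t : ℕ => (γ * p) ^ t := summable_geometric_of_lt_one hγp0 hγp
      have hsum2 : Summable fun t : ℕ => γ ^ t := summable_geometric_of_lt_one hγ0 hγ1
      have hterm : ∀ t : ℕ, E.γ ^ t * Matrix.vecMul E.μ (E.polMatrix π ^ (t + 1)) (some j)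
          = (q j / (p - 1)) * (p * (γ * p) ^ t - γ ^ t) := by
        intro t
        rw [(key t).2 j, geom_sum_eq (fun h => hpne (by rw [h]; ring)) (t+1), hγE, mul_pow]
        field_simp
        ring
      rw [tsum_congr hterm, tsum_mul_left,
        Summable.tsum_sub (hsum1.mul_left p) hsum2, tsum_mul_left,
        tsum_geometric_of_lt_one hγp0 hγp, tsum_geometric_of_lt_one hγ0 hγ1, hγE]
      have h1 : 1 - γ * p ≠ 0 := by linarith
      have h2 : 1 - γ ≠ 0 := by linarith
      have hγpv : 1 - γ * p = (1 - γ) / D := by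
        rw [hpdef, hDdef]
        field_simp [show (1 - γ * X) ≠ 0 from hD'.ne']
        ring
      have hpm1 : p - 1 = -((1 - γ) * X) / D := by
        rw [hpdef, hDdef]
        rw [div_sub_one (show (1 - γ * X) ≠ 0 from hD'.ne')]
        ring
      have hqv : q j = (1 - γ) * x a j / D := rfl
      rw [hqv, hγpv, hpm1, hpdef]
      field_simp
      ring
end

section
/- Let X be a d×K real matrix with columns x^{(1)},…,x^{(K)}, let X̃ = X(I_K − (1/K)1_K 1_K^⊤), and define spread(X) as the d-th largest singular value of X̃. Suppose spread(X) > 0. Then for any y ∈ ℝ^d with ‖y‖₂ > ε√((K-1)/2)/spread(X), there exist indices a, a' ∈ {1,…,K} such that y^⊤(x^{(a)} − x^{(a')}) > ε. -/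
set_option maxHeartbeats 1000000

/-- let X̃ = X(I - (1/K)11ᵀ) and let s = spread(X) be the d-th
largest singular value of X̃, characterized variationally as the minimum of
‖yᵀX̃‖₂ over unit vectors y ∈ ℝ^d.  If s > 0, then any y with
‖y‖₂ > ε√((K-1)/2)/s separates two columns of X by more than ε. -/
theorem stmt11 (d K : ℕ) (X : Matrix (Fin d) (Fin K) ℝ) (ε s : ℝ)
    (tX : Matrix (Fin d) (Fin K) ℝ)
    (htX : ∀ i k, tX i k = X i k - (∑ k', X i k') / K)
    (hs : IsLeast {r : ℝ | ∃ y : Fin d → ℝ, ∑ i, (y i) ^ 2 = 1 ∧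
        r = Real.sqrt (∑ k, (∑ i, y i * tX i k) ^ 2)} s)
    (hspos : 0 < s) (hε : 0 < ε)
    (y : Fin d → ℝ)
    (hy : ε * Real.sqrt (((K : ℝ) - 1) / 2) / s < Real.sqrt (∑ i, (y i) ^ 2)) :
    ∃ a a' : Fin K, ε < ∑ i, y i * (X i a - X i a') := by
  have hK2 : 2 ≤ K := by
    by_contra h
    interval_cases K
    · obtain ⟨y0, hy0, hr⟩ := hs.1
      simp at hr
      linarith
    · obtain ⟨y0, hy0, hr⟩ := hs.1
      have ht0 : ∀ i, tX i 0 = 0 := by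
        intro i; rw [htX]; simp
      simp [Fin.sum_univ_one, ht0] at hr
      linarith
  have hKR : (2:ℝ) ≤ (K:ℝ) := by exact_mod_cast hK2
  have hKpos : (0:ℝ) < (K:ℝ) := by linarith
  obtain ⟨w, hw⟩ : ∃ w : Fin K → ℝ, ∀ k, w k = ∑ i, y i * tX i k := ⟨_, fun _ => rfl⟩
  set sy : ℝ := Real.sqrt (∑ i, (y i) ^ 2) with hsydef
  have hsynn : 0 ≤ ∑ i, (y i)^2 := Finset.sum_nonneg fun i _ => sq_nonneg _
  have hsy0 : 0 < sy := lt_of_le_of_lt (by positivity) hy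
  have hsq : sy ^ 2 = ∑ i, (y i)^2 := Real.sq_sqrt hsynn
  -- sum of w is zero
  have hsum : ∑ k, w k = 0 := by
    have hrow : ∀ i, ∑ k, tX i k = 0 := by
      intro i
      simp only [htX, Finset.sum_sub_distrib, Finset.sum_const, Finset.card_univ,
        Fintype.card_fin, nsmul_eq_mul]
      field_simp
      ring
    simp only [hw]
    rw [Finset.sum_comm]
    simp [← Finset.mul_sum, hrow]
  -- variational lower bound
  have hmem : Real.sqrt (∑ k, (∑ i, (y i / sy) * tX i k) ^ 2) ∈
      {r : ℝ | ∃ y : Fin d → ℝ, ∑ i, (y i) ^ 2 = 1 ∧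
        r = Real.sqrt (∑ k, (∑ i, y i * tX i k) ^ 2)} := by
    refine ⟨fun i => y i / sy, ?_, rfl⟩
    simp only [div_pow, ← Finset.sum_div]
    rw [← hsq, div_self (by positivity)]
  have hle := hs.2 hmem
  have hrw : Real.sqrt (∑ k, (∑ i, (y i / sy) * tX i k) ^ 2)
      = Real.sqrt (∑ k, (w k) ^ 2) / sy := by
    have h2 : ∀ k, ∑ i, (y i / sy) * tX i k = (∑ i, y i * tX i k) / sy := by
      intro k
      rw [Finset.sum_div]
      exact Finset.sum_congr rfl fun i _ => by ring
    simp_rw [h2, div_pow, ← Finset.sum_div]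
    rw [Real.sqrt_div (Finset.sum_nonneg fun k _ => sq_nonneg _), Real.sqrt_sq hsy0.le]
    simp_rw [hw]
  rw [hrw, le_div_iff₀ hsy0] at hle
  rw [div_lt_iff₀ hspos] at hy
  have hc : (0:ℝ) ≤ ((K:ℝ) - 1)/2 := by linarith
  have hwnn : (0:ℝ) ≤ ∑ k, (w k)^2 := Finset.sum_nonneg fun k _ => sq_nonneg _
  have h1 : ε * Real.sqrt (((K:ℝ) - 1)/2) < Real.sqrt (∑ k, (w k)^2) := by
    calc ε * Real.sqrt (((K:ℝ) - 1)/2) < sy * s := hy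
    _ = s * sy := by ring
    _ ≤ Real.sqrt (∑ k, (w k)^2) := hle
  have key : ε^2 * (((K:ℝ) - 1)/2) < ∑ k, (w k)^2 := by
    have hA : (0:ℝ) ≤ ε * Real.sqrt (((K:ℝ) - 1)/2) := by positivity
    nlinarith [mul_self_lt_mul_self hA h1, Real.sq_sqrt hc, Real.sq_sqrt hwnn]
  by_contra hcon
  push_neg at hcon
  have hww : ∀ a a' : Fin K, w a - w a' = ∑ i, y i * (X i a - X i a') := by
    intro a a'
    simp only [hw, ← Finset.sum_sub_distrib]
    exact Finset.sum_congr rfl fun i _ => by rw [htX, htX]; ring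
  haveI : Nonempty (Fin K) := ⟨⟨0, by omega⟩⟩
  have hne : (Finset.univ : Finset (Fin K)).Nonempty := Finset.univ_nonempty
  obtain ⟨aM, -, hM⟩ := Finset.exists_max_image Finset.univ w hne
  obtain ⟨am, -, hm⟩ := Finset.exists_min_image Finset.univ w hne
  have hMk : ∀ k, w k ≤ w aM := fun k => hM k (Finset.mem_univ k)
  have hmk : ∀ k, w am ≤ w k := fun k => hm k (Finset.mem_univ k)
  have hMm : w aM - w am ≤ ε := by
    have := hcon aM am
    rw [← hww] at this
    exact this
  have hm0 : w am ≤ 0 := by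
    have h := Finset.card_nsmul_le_sum Finset.univ w (w am) (fun k _ => hmk k)
    rw [hsum, Finset.card_univ, Fintype.card_fin, nsmul_eq_mul] at h
    nlinarith
  have hM0 : 0 ≤ w aM := by
    have h := Finset.sum_le_card_nsmul Finset.univ w (w aM) (fun k _ => hMk k)
    rw [hsum, Finset.card_univ, Fintype.card_fin, nsmul_eq_mul] at h
    nlinarith
  have hpt : ∀ k, (w k)^2 ≤ (w aM + w am) * w k - w aM * w am := by
    intro k
    nlinarith [mul_nonneg (sub_nonneg.2 (hMk k)) (sub_nonneg.2 (hmk k))]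
  have hsum2 : ∑ k, (w k)^2 ≤ (K:ℝ) * (-(w aM * w am)) := by
    calc ∑ k, (w k)^2 ≤ ∑ k, ((w aM + w am) * w k - w aM * w am) :=
          Finset.sum_le_sum fun k _ => hpt k
    _ = (w aM + w am) * (∑ k, w k) - (K:ℝ) * (w aM * w am) := by
        rw [Finset.sum_sub_distrib, ← Finset.mul_sum, Finset.sum_const, Finset.card_univ,
          Fintype.card_fin, nsmul_eq_mul]
    _ = (K:ℝ) * (-(w aM * w am)) := by rw [hsum]; ring
  have ha : 0 ≤ w aM - w am := by linarith
  have hb : (w aM - w am)^2 ≤ ε^2 := pow_le_pow_left₀ ha hMm 2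
  have h4 : -(w aM * w am) ≤ ε^2/4 := by
    linarith [sq_nonneg (w aM + w am), hb]
  have h5 : ∑ k, (w k)^2 ≤ (K:ℝ) * (ε^2/4) :=
    le_trans hsum2 (mul_le_mul_of_nonneg_left h4 hKpos.le)
  have hp : (0:ℝ) ≤ ((K:ℝ) - 2) * ε^2 := mul_nonneg (by linarith) (sq_nonneg ε)
  linarith [key, h5, hp]
end

section
/- In the linear bandit setting, suppose the ellipsoid algorithm's center c at some round T₀ satisfies ‖c − θ⋆‖_∞ > ε. Then there exists a task (X, R) with two actions on which the algorithm (which plays greedily with respect to c + R, with arbitrary tie-breaking) can make a mistake, i.e., can incur loss l = (θ⋆ + R)^⊤(x^{(a⋆)} − x^{(a)}) > ε. Contrapositively, if no choice of task and tie-breaking can cause a further mistake, then ‖c − θ⋆‖_∞ ≤ ε. -/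
/-- if the ellipsoid center c satisfies ‖c - θ⋆‖_∞ > ε, then
there is a two-action task (features with ℓ₁ norm ≤ 1, task reward R = -c in
the construction) on which both actions are greedily tied w.r.t. c + R yet one
available (tie-broken) choice incurs loss more than ε under θ⋆ + R.
(The norm on `Fin d → ℝ` is the sup norm.) -/
theorem stmt12 (d : ℕ) (ε : ℝ) (c θs : Fin d → ℝ) (h : ε < ‖c - θs‖) :
    ∃ (x : Fin 2 → Fin d → ℝ) (R : Fin d → ℝ),
      (∀ a, ∑ i, |x a i| ≤ 1) ∧
      (∀ a b : Fin 2, ∑ i, (c i + R i) * x a i = ∑ i, (c i + R i) * x b i) ∧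
      (∃ a b : Fin 2,
        ε < ∑ i, (θs i + R i) * x b i - ∑ i, (θs i + R i) * x a i) := by
  rcases lt_or_ge ε 0 with hε | hε
  · exact ⟨fun _ _ => 0, fun i => -(c i), by simp, by simp, 0, 0, by simpa using hε⟩
  · have hj' : ∃ j, ε < |c j - θs j| := by
      by_contra hc
      push_neg at hc
      have hle : ‖c - θs‖ ≤ ε := by
        apply pi_norm_le_iff_of_nonneg hε |>.mpr
        intro i
        simpa [Real.norm_eq_abs] using hc i
      exact absurd h (not_lt.mpr hle)
    obtain ⟨j, hj⟩ := hj'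
    set s : ℝ := if 0 ≤ θs j - c j then 1 else -1 with hs
    have hsabs : (θs j - c j) * s = |θs j - c j| := by
      rcases le_or_gt 0 (θs j - c j) with h1 | h1
      · simp [hs, h1, abs_of_nonneg h1]
      · simp [hs, not_le.mpr h1, abs_of_neg h1]
    refine ⟨fun a => if a = 1 then Pi.single j s else 0, fun i => -(c i), ?_, ?_, 0, 1, ?_⟩
    · intro a
      fin_cases a
      · simp
      · have : ∑ i, |Pi.single j s i| = |s| := by
          rw [Finset.sum_eq_single j]
          · simp
          · intro b _ hb
            simp [Pi.single_apply, hb]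
          · simp
        have habs : |s| = 1 := by
          rcases le_or_gt 0 (θs j - c j) with h1 | h1 <;> simp [hs, h1, not_le.mpr, *]
        calc ∑ i, |(if (⟨1, by omega⟩ : Fin 2) = 1 then Pi.single j s else 0) i|
            = ∑ i, |Pi.single j s i| := by norm_num
          _ ≤ 1 := by rw [this, habs]
    · intro a b; simp
    · have hrw : ∀ f : Fin d → ℝ, ∑ i, f i * (Pi.single j s : Fin d → ℝ) i = f j * s := by
        intro f
        rw [Finset.sum_eq_single j]
        · simp
        · intro b _ hb; simp [Pi.single_apply, hb]
        · simp
      simp only [one_ne_zero, if_true, if_neg (by decide : (0 : Fin 2) ≠ 1), if_pos rfl]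
      have := hrw (fun i => θs i + -(c i))
      simp only [this]
      have : (θs j + -c j) * s = |c j - θs j| := by
        rw [show θs j + -c j = θs j - c j by ring, hsabs, abs_sub_comm]
      rw [this]
      simpa using hj
end
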